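/- Let k be a field of characteristic 0, 𝔐 a monomial group, and (ε_i)_{i∈I} a summable family in k[[𝔐]]^{≺1}. Then the family (∏_{i∈E} ε_i)_E, indexed by the finite subsets E of I, is summable, and exp(∑_{i} log(1+ε_i)) = ∑_E ∏_{i∈E} ε_i. -/

import Mathlib

noncomputable section

open Classical

namespace LogHyp

universe u v w

/-- A subset of a totally ordered set is *well-based* if it contains no infinite
strictly increasing sequence. -/
def WellBased {M : Type u} [Preorder M] (S : Set M) : Prop :=
  ¬ ∃ f : ℕ → M, StrictMono f ∧ ∀ n, f n ∈ S

theorem wellBased_isPWO {M : Type u} [LinearOrder M] {S : Set Mᵒᵈ}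
    (h : WellBased (OrderDual.toDual ⁻¹' S)) : S.IsPWO := by
  rw [Set.isPWO_iff_isWF, Set.isWF_iff_no_descending_seq]
  intro f hf hmem
  exact h ⟨fun n => OrderDual.ofDual (f n), fun a b hab => hf hab, hmem⟩

/-- A family in a field of well-based series (series with monomials in `Mᵒᵈ`,
so that supports are well-based as subsets of `M`) is summable if the union of
the supports is well-based and each monomial lies in the support of only
finitely many members. -/
def IsSummable {M : Type u} [LinearOrder M] {R : Type v} [Zero R] {ι : Type w}
    (f : ι → HahnSeries Mᵒᵈ R) : Prop :=
  WellBased (OrderDual.toDual ⁻¹' (⋃ i, (f i).support)) ∧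
    ∀ g : Mᵒᵈ, {i | (f i).coeff g ≠ 0}.Finite

/-- The sum of a summable family (junk value `0` if the family is not summable). -/
noncomputable def famSum {M : Type u} [LinearOrder M] {R : Type v} [AddCommMonoid R] {ι : Type w}
    (f : ι → HahnSeries Mᵒᵈ R) : HahnSeries Mᵒᵈ R :=
  if h : IsSummable f then
    (⟨f, wellBased_isPWO h.1, h.2⟩ : HahnSeries.SummableFamily Mᵒᵈ R ι).hsum
  else 0

/-- Strongly `k`-linear maps between fields of well-based series:
`k`-linear maps sending summable families to summable families, preserving sums. -/
def IsStronglyLinear {k : Type v} [Semiring k] {M : Type u} {N : Type w}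
    [LinearOrder M] [LinearOrder N]
    (Φ : HahnSeries Mᵒᵈ k → HahnSeries Nᵒᵈ k) : Prop :=
  (∀ (c : k) (f : HahnSeries Mᵒᵈ k), Φ (c • f) = c • Φ f) ∧
  (∀ f g, Φ (f + g) = Φ f + Φ g) ∧
  ∀ {ι : Type u} (f : ι → HahnSeries Mᵒᵈ k), IsSummable f →
    IsSummable (fun i => Φ (f i)) ∧ Φ (famSum f) = famSum fun i => Φ (f i)

/-- `f ≺ g`: the dominant monomial of `f` is smaller than that of `g`
(with `𝔡 0` below all monomials). -/
def prec {M : Type u} [LinearOrder M] {R : Type v} [Zero R]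
    (f g : HahnSeries Mᵒᵈ R) : Prop :=
  g ≠ 0 ∧ ∀ m ∈ f.support, ∃ n ∈ g.support,
    (OrderDual.ofDual m : M) < OrderDual.ofDual n

/-- `f ⪯ g`: the dominant monomial of `f` is at most that of `g`. -/
def preceq {M : Type u} [LinearOrder M] {R : Type v} [Zero R]
    (f g : HahnSeries Mᵒᵈ R) : Prop :=
  ∀ m ∈ f.support, ∃ n ∈ g.support, (OrderDual.ofDual m : M) ≤ OrderDual.ofDual n

/-- The coefficient of the dominant (i.e. maximal) monomial of `f` (0 for `f = 0`). -/
noncomputable def leadCoeff {M : Type u} [LinearOrder M] {k : Type v} [Zero k]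
    (f : HahnSeries Mᵒᵈ k) : k :=
  if hf : f = 0 then 0
  else f.coeff (f.isWF_support.min (HahnSeries.support_nonempty_iff.mpr hf))

/-- `f > 0` for real well-based series: the leading coefficient is positive. -/
def SPos {M : Type u} [LinearOrder M] (f : HahnSeries Mᵒᵈ ℝ) : Prop := 0 < leadCoeff f

/-- The ordering of real well-based series: `f < g` iff `g - f` has positive
leading coefficient. -/
def SLt {M : Type u} [LinearOrder M] (f g : HahnSeries Mᵒᵈ ℝ) : Prop := SPos (g - f)

/-- `f > ℝ` : `f` exceeds every real constant. -/
def gtR {M : Type u} [AddCommGroup M] [LinearOrder M] [IsOrderedAddMonoid M] (f : HahnSeries Mᵒᵈ ℝ) : Prop :=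
  ∀ r : ℝ, SLt (HahnSeries.C r) f

/-- `log(1+ε) = ∑_{n≥1} (-1)^{n-1} ε^n / n`, for `ε ≺ 1`. -/
noncomputable def log1p {M : Type u} [AddCommGroup M] [LinearOrder M] [IsOrderedAddMonoid M] {k : Type v} [Field k]
    (ε : HahnSeries Mᵒᵈ k) : HahnSeries Mᵒᵈ k :=
  famSum fun n : ℕ => ((-1 : k) ^ n / ((n : k) + 1)) • ε ^ (n + 1)

/-- `exp(ε) = ∑_{n≥0} ε^n / n!`, for `ε ≺ 1`. -/
noncomputable def expS {M : Type u} [AddCommGroup M] [LinearOrder M] [IsOrderedAddMonoid M] {k : Type v} [Field k]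
    (f : HahnSeries Mᵒᵈ k) : HahnSeries Mᵒᵈ k :=
  famSum fun n : ℕ => ((n.factorial : k))⁻¹ • f ^ n

/-- The operator support of a linear operator: the smallest set `𝔖` of monomials with
`supp S(m) ⊆ 𝔖·m` for all monomials `m`. -/
def opSupport {M : Type u} [AddCommGroup M] [LinearOrder M] [IsOrderedAddMonoid M] {k : Type v} [Zero k] [One k]
    (S : HahnSeries Mᵒᵈ k → HahnSeries Mᵒᵈ k) : Set Mᵒᵈ :=
  ⋃ m : Mᵒᵈ, (fun g => g - m) '' (S (HahnSeries.single m 1)).support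



/-- The ordinals below `α`. -/
abbrev Idx (α : Ordinal.{0}) : Type 1 := {β : Ordinal.{0} // β < α}

/-- The monomial group `𝔏_{<α}`, written additively: a logarithmic hypermonomial
`ℓ^r = ∏_{β<α} ℓ_β^{r_β}` is identified with its exponent sequence `r`, and the
group is ordered lexicographically. -/
abbrev Mon (α : Ordinal.{0}) : Type 1 := Lex (Idx α → ℝ)

/-- The field `𝕃_{<α} = ℝ[[𝔏_{<α}]]` of logarithmic hyperseries: well-based series
with real coefficients and monomials in `𝔏_{<α}` (we use the order dual so that
supports are well-based, i.e. reverse well-ordered, subsets of `𝔏_{<α}`). -/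
abbrev LSeries (α : Ordinal.{0}) : Type 1 := HahnSeries (Mon α)ᵒᵈ ℝ

/-- The monomial `ℓ^r` as an element of the (dualised) monomial group. -/
def monExp (α : Ordinal.{0}) (r : Idx α → ℝ) : (Mon α)ᵒᵈ := OrderDual.toDual (toLex r)

/-- The monomial `ℓ^r` as an element of `𝕃_{<α}`. -/
noncomputable def monS (α : Ordinal.{0}) (r : Idx α → ℝ) : LSeries α :=
  HahnSeries.single (monExp α r) 1

/-- The exponent sequence of the hyperlogarithm `ℓ_β`. -/
def ellExp (α β : Ordinal.{0}) : Idx α → ℝ := fun ρ => if ρ.1 = β then 1 else 0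

/-- The hyperlogarithm `ℓ_β` as an element of `𝕃_{<α}` (for `β < α`). -/
noncomputable def ell (α β : Ordinal.{0}) : LSeries α := monS α (ellExp α β)

/-- The exponent sequence of `ℓ_β' = ∏_{ρ<β} ℓ_ρ⁻¹`. -/
def derExp (α β : Ordinal.{0}) : Idx α → ℝ := fun ρ => if ρ.1 < β then -1 else 0

/-- The exponent sequence of `ℓ_β† = ∏_{ρ≤β} ℓ_ρ⁻¹`. -/
def dagExp (α β : Ordinal.{0}) : Idx α → ℝ := fun ρ => if ρ.1 ≤ β then -1 else 0

/-- `D` is *the* derivation of `𝕃_{<α}`: a strongly `ℝ`-linear derivation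
with `D ℓ_β = ∏_{ρ<β} ℓ_ρ⁻¹` for all `β < α`. -/
def IsDerL (α : Ordinal.{0}) (D : LSeries α → LSeries α) : Prop :=
  IsStronglyLinear D ∧ (∀ f g, D (f * g) = f * D g + g * D f) ∧
    ∀ β : Ordinal.{0}, β < α → D (ell α β) = monS α (derExp α β)

/-- The exponent sequence of the dominant monomial of `f` (0 if `f = 0`). -/
noncomputable def domExp (α : Ordinal.{0}) (f : LSeries α) : Idx α → ℝ :=
  if hf : f = 0 then 0
  else ofLex (OrderDual.ofDual
    (f.isWF_support.min (HahnSeries.support_nonempty_iff.mpr hf)))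

/-- The logarithm on `𝕃_{<α}^{>0}` (`α` a limit ordinal):
`log (c·ℓ^r·(1+ε)) = ∑_β r_β ℓ_{β+1} + log c + ∑_{n≥1} (-1)^{n-1} ε^n/n`. -/
noncomputable def logFn (α : Ordinal.{0}) (f : LSeries α) : LSeries α :=
  (famSum fun β : Idx α => domExp α f β • ell α (β.1 + 1))
    + HahnSeries.C (Real.log (leadCoeff f))
    + log1p (f * (HahnSeries.single (monExp α (domExp α f)) (leadCoeff f))⁻¹ - 1)

/-- The logarithmicity `λ_f`: the least `β` with `r_β ≠ 0`, where `𝔡(f) = ℓ^r`. -/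
noncomputable def lambdaOf (α : Ordinal.{0}) (f : LSeries α) : Ordinal.{0} :=
  sInf {β : Ordinal.{0} | ∃ h : β < α, domExp α f ⟨β, h⟩ ≠ 0}

/-- The coefficient of `ω^δ` in the Cantor normal form of `μ`. -/
noncomputable def cnfCoeff (μ δ : Ordinal.{0}) : ℕ :=
  Cardinal.toNat (Ordinal.card ((μ / Ordinal.omega0 ^ δ) % Ordinal.omega0))

/-- `λ_{g;ν}`: writing `λ_g = ω^{β₁}n₁ + ⋯ + ω^{β_k}n_k` in Cantor normal form,
this is `n_i` if `ν = ω^{β_i+1}`, and `0` for every other ordinal `ν`. -/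
noncomputable def lambdaCoeff (α : Ordinal.{0}) (g : LSeries α) (ν : Ordinal.{0}) : ℕ :=
  if h : ∃ δ : Ordinal.{0}, ν = Ordinal.omega0 ^ (δ + 1) then
    cnfCoeff (lambdaOf α g) h.choose
  else 0

/-- A composition on `𝕃_{<α}` (axioms (CL1)–(CL5)); `C f g` is `f ∘ g`,
subject to conditions only when the right argument is `> ℝ`. -/
def IsCompositionOp (α : Ordinal.{0}) (C : LSeries α → LSeries α → LSeries α) : Prop :=
  -- (CL1): for each g > ℝ, `f ↦ f ∘ g` is an ℝ-algebra homomorphism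
  (∀ g, gtR g →
    C 1 g = 1 ∧
    (∀ f₁ f₂, C (f₁ + f₂) g = C f₁ g + C f₂ g) ∧
    (∀ f₁ f₂, C (f₁ * f₂) g = C f₁ g * C f₂ g) ∧
    (∀ c : ℝ, C (HahnSeries.C c) g = HahnSeries.C c)) ∧
  -- (CL2)
  (∀ f, C f (ell α 0) = f) ∧
  (∀ g, gtR g → C (ell α 0) g = g) ∧
  -- (CL3)
  (∀ f g, gtR g → SPos f → C (logFn α f) g = logFn α (C f g)) ∧
  -- (CL4)
  (∀ g, gtR g → ∀ {ι : Type 1} (F : ι → LSeries α), IsSummable F →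
    IsSummable (fun i => C (F i) g) ∧ C (famSum F) g = famSum fun i => C (F i) g) ∧
  -- (CL5)
  (∀ f g h, gtR g → gtR h → C (C f g) h = C f (C g h))

/-- A composition admits Taylor expansion if for `g > ℝ` and `h ≺ g` the family
`(f⁽ⁿ⁾∘g)·hⁿ/n!` is summable with sum `f∘(g+h)`. -/
def AdmitsTaylor (α : Ordinal.{0}) (D : LSeries α → LSeries α)
    (C : LSeries α → LSeries α → LSeries α) : Prop :=
  ∀ f g h, gtR g → prec h g →
    IsSummable (fun n : ℕ => ((n.factorial : ℝ))⁻¹ • (C (D^[n] f) g * h ^ n)) ∧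
    C f (g + h) = famSum fun n : ℕ => ((n.factorial : ℝ))⁻¹ • (C (D^[n] f) g * h ^ n)

/-- The hyperlogarithm identities for a composition on `𝕃_{<ω^λ}`. -/
def HyperlogIds (lam : Ordinal.{0})
    (C : LSeries (Ordinal.omega0 ^ lam) → LSeries (Ordinal.omega0 ^ lam) →
      LSeries (Ordinal.omega0 ^ lam)) : Prop :=
  (∀ β γ : Ordinal.{0}, β < lam → γ < Ordinal.omega0 ^ (β + 1) →
      C (ell (Ordinal.omega0 ^ lam) γ) (ell (Ordinal.omega0 ^ lam) (Ordinal.omega0 ^ β))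
        = ell (Ordinal.omega0 ^ lam) (Ordinal.omega0 ^ β + γ)) ∧
  (∀ β : Ordinal.{0}, β < lam →
      C (ell (Ordinal.omega0 ^ lam) (Ordinal.omega0 ^ (β + 1)))
          (ell (Ordinal.omega0 ^ lam) (Ordinal.omega0 ^ β))
        = ell (Ordinal.omega0 ^ lam) (Ordinal.omega0 ^ (β + 1)) - 1) ∧
  (∀ β γ : Ordinal.{0}, β < γ → γ < lam → Order.IsSuccLimit γ →
      (C (ell (Ordinal.omega0 ^ lam) (Ordinal.omega0 ^ γ))
          (ell (Ordinal.omega0 ^ lam) (Ordinal.omega0 ^ β))).coeff 0 = 0)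


/-! ### Auxiliary machinery -/

section Bridge

variable {M : Type u} [LinearOrder M] {R : Type v}

theorem wellBased_of_isPWO {S : Set Mᵒᵈ} (h : S.IsPWO) :
    WellBased (OrderDual.toDual ⁻¹' S) := by
  rw [Set.isPWO_iff_isWF, Set.isWF_iff_no_descending_seq] at h
  rintro ⟨f, hf, hmem⟩
  exact h (fun n => OrderDual.toDual (f n)) (fun a b hab => hf hab) hmem

theorem isSummable_coeFam [AddCommMonoid R] {ι : Type w}
    (s : HahnSeries.SummableFamily Mᵒᵈ R ι) : IsSummable ⇑s :=
  ⟨wellBased_of_isPWO s.isPWO_iUnion_support, s.finite_co_support'⟩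

theorem famSum_coeFam [AddCommMonoid R] {ι : Type w}
    (s : HahnSeries.SummableFamily Mᵒᵈ R ι) : famSum ⇑s = s.hsum := by
  rw [famSum, dif_pos (isSummable_coeFam s)]
  have : (⟨⇑s, wellBased_isPWO (isSummable_coeFam s).1, (isSummable_coeFam s).2⟩ :
      HahnSeries.SummableFamily Mᵒᵈ R ι) = s :=
    HahnSeries.SummableFamily.coe_injective rfl
  rw [this]

end Bridge

section Gamma

open HahnSeries Finset

variable {Γ : Type u} [AddCommMonoid Γ] [LinearOrder Γ] [IsOrderedCancelAddMonoid Γ] {R : Type v}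

theorem sum_coeff' [AddCommMonoid R] {α : Type w} (T : Finset α)
    (F : α → HahnSeries Γ R) (g : Γ) :
    (∑ a ∈ T, F a).coeff g = ∑ a ∈ T, (F a).coeff g := by
  classical
  induction T using Finset.induction_on with
  | empty => simp
  | insert _ _ hx ih => simp [Finset.sum_insert hx, ih]

theorem support_sum_subset [AddCommMonoid R] {α : Type w} (T : Finset α)
    (F : α → HahnSeries Γ R) :
    (∑ a ∈ T, F a).support ⊆ ⋃ a ∈ T, (F a).support := by
  intro g hg
  rw [HahnSeries.mem_support, sum_coeff'] at hg
  obtain ⟨a, ha, hne⟩ := Finset.exists_ne_zero_of_sum_ne_zero hg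
  exact Set.mem_biUnion ha hne

theorem mul_coeff_subset [NonUnitalNonAssocSemiring R] {x y : HahnSeries Γ R}
    {s t : Set Γ} (hs : s.IsPWO) (ht : t.IsPWO) (hxs : x.support ⊆ s)
    (hyt : y.support ⊆ t) (a : Γ) :
    (x * y).coeff a = ∑ ij ∈ Finset.antidiagonal hs ht a,
      x.coeff ij.1 * y.coeff ij.2 := by
  rw [coeff_mul_left' hs hxs]
  refine Finset.sum_subset (fun ij hij => ?_) (fun ij hij hij' => ?_)
  · rw [Finset.mem_addAntidiagonal] at hij ⊢
    exact ⟨hij.1, hyt hij.2.1, hij.2.2⟩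
  · rw [Finset.mem_addAntidiagonal] at hij hij'
    push_neg at hij'
    have : y.coeff ij.2 = 0 := by
      by_contra hy
      exact (hij' hij.1 hy) hij.2.2
    simp [this]

/-- Regrouping a summable family along a map with finite fibers. -/
def fiberFam [AddCommMonoid R] {α β : Type w} (s : SummableFamily Γ R α)
    (p : α → β) (hp : ∀ b, (p ⁻¹' {b}).Finite) : SummableFamily Γ R β where
  toFun b := ∑ a ∈ (hp b).toFinset, s a
  isPWO_iUnion_support' := by
    refine s.isPWO_iUnion_support.mono (Set.iUnion_subset fun b => ?_)
    refine (support_sum_subset _ _).trans ?_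
    exact Set.iUnion₂_subset fun a _ => Set.subset_iUnion (fun a => (s a).support) a
  finite_co_support' g := by
    refine ((s.finite_co_support g).image p).subset ?_
    intro b hb
    simp only [ne_eq, Set.mem_setOf_eq, sum_coeff'] at hb
    obtain ⟨a, ha, hne⟩ := Finset.exists_ne_zero_of_sum_ne_zero hb
    refine ⟨a, hne, ?_⟩
    simpa using (hp b).mem_toFinset.1 ha

theorem fiberFam_hsum [AddCommMonoid R] {α β : Type w} (s : SummableFamily Γ R α)
    (p : α → β) (hp : ∀ b, (p ⁻¹' {b}).Finite) :
    (fiberFam s p hp).hsum = s.hsum := by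
  classical
  ext g
  set T : Finset α := (s.finite_co_support g).toFinset with hT
  have hTmem : ∀ a, a ∈ T ↔ (s a).coeff g ≠ 0 := fun a => Set.Finite.mem_toFinset _
  have h1 : (fiberFam s p hp).hsum.coeff g = ∑ b ∈ T.image p, ∑ a ∈ (hp b).toFinset,
      (s a).coeff g := by
    rw [SummableFamily.coeff_hsum_eq_sum_of_subset (t := T.image p)]
    · refine Finset.sum_congr rfl fun b _ => ?_
      exact sum_coeff' _ _ _
    · intro b hb
      simp only [ne_eq, Set.mem_setOf_eq] at hb
      have : ((fiberFam s p hp) b).coeff g ≠ 0 := hb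
      rw [show (fiberFam s p hp) b = ∑ a ∈ (hp b).toFinset, s a from rfl, sum_coeff'] at this
      obtain ⟨a, ha, hne⟩ := Finset.exists_ne_zero_of_sum_ne_zero this
      exact Finset.mem_coe.2 (Finset.mem_image.2 ⟨a, (hTmem a).2 hne,
        by simpa using (hp b).mem_toFinset.1 ha⟩)
  rw [h1, SummableFamily.coeff_hsum_eq_sum_of_subset (t := T)
    (fun a ha => (hTmem a).2 ha)]
  rw [← Finset.sum_biUnion]
  · refine (Finset.sum_subset (fun a ha => ?_) (fun a _ ha => ?_)).symm
    · rw [Finset.mem_biUnion]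
      exact ⟨p a, Finset.mem_image_of_mem p ha, (hp (p a)).mem_toFinset.2 rfl⟩
    · by_contra hne
      exact ha ((hTmem a).2 hne)
  · intro b1 h1' b2 h2' hne
    simp only [Finset.disjoint_left]
    intro a ha1 ha2
    have e1 : p a = b1 := by simpa using (hp b1).mem_toFinset.1 ha1
    have e2 : p a = b2 := by simpa using (hp b2).mem_toFinset.1 ha2
    exact hne (e1 ▸ e2 ▸ rfl)

variable {k : Type v} [Field k]

/-- The family `n ↦ c n • x ^ n` for `x` of positive order. -/
def powersFam (x : HahnSeries Γ k) (hx : 0 < x.orderTop) (c : ℕ → k) :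
    SummableFamily Γ k ℕ where
  toFun n := c n • x ^ n
  isPWO_iUnion_support' := by
    refine (SummableFamily.isPWO_iUnion_support_powers (zero_le_orderTop_iff.mp hx.le)).mono (Set.iUnion_subset fun n => ?_)
    refine Set.Subset.trans (fun g hg => ?_) (Set.subset_iUnion (fun n => (x ^ n).support) n)
    rw [HahnSeries.mem_support, HahnSeries.coeff_smul] at hg
    exact fun h => hg (by rw [h, smul_zero])
  finite_co_support' g := by
    refine ((SummableFamily.powers x).finite_co_support g).subset fun n hn => ?_
    simp only [ne_eq, Set.mem_setOf_eq, HahnSeries.coeff_smul] at hn ⊢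
    rw [Function.mem_support, SummableFamily.coe_powers hx]
    exact fun h => hn (by rw [h, smul_zero])

@[simp] theorem powersFam_apply (x : HahnSeries Γ k) (hx : 0 < x.orderTop)
    (c : ℕ → k) (n : ℕ) : powersFam x hx c n = c n • x ^ n := rfl

/-- Evaluation of a power series at a series of positive order. -/
def pseval (x : HahnSeries Γ k) (hx : 0 < x.orderTop) (f : PowerSeries k) :
    HahnSeries Γ k :=
  (powersFam x hx (fun n => PowerSeries.coeff n f)).hsum

theorem pseval_add (x : HahnSeries Γ k) (hx : 0 < x.orderTop) (f g : PowerSeries k) :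
    pseval x hx (f + g) = pseval x hx f + pseval x hx g := by
  rw [pseval, pseval, pseval, ← SummableFamily.hsum_add]
  congr 1
  ext n
  simp [SummableFamily.add_apply, add_smul]

theorem pseval_one (x : HahnSeries Γ k) (hx : 0 < x.orderTop) :
    pseval x hx 1 = 1 := by
  ext g
  rw [pseval, SummableFamily.coeff_hsum_eq_sum_of_subset (t := {0})]
  · simp [PowerSeries.coeff_one]
  · intro n hn
    simp only [ne_eq, Set.mem_setOf_eq, powersFam_apply, HahnSeries.coeff_smul] at hn
    rcases Nat.eq_zero_or_pos n with h | h
    · simp [h]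
    · exfalso
      apply hn
      rw [PowerSeries.coeff_one, if_neg (Nat.pos_iff_ne_zero.mp h), zero_smul]

theorem pseval_X (x : HahnSeries Γ k) (hx : 0 < x.orderTop) :
    pseval x hx PowerSeries.X = x := by
  ext g
  rw [pseval, SummableFamily.coeff_hsum_eq_sum_of_subset (t := {1})]
  · simp [PowerSeries.coeff_X]
  · intro n hn
    simp only [ne_eq, Set.mem_setOf_eq, powersFam_apply, HahnSeries.coeff_smul] at hn
    rcases eq_or_ne n 1 with h | h
    · simp [h]
    · exfalso
      apply hn
      rw [PowerSeries.coeff_X, if_neg h, zero_smul]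

theorem pseval_mul (x : HahnSeries Γ k) (hx : 0 < x.orderTop) (f g : PowerSeries k) :
    pseval x hx (f * g) = pseval x hx f * pseval x hx g := by
  classical
  have hp : ∀ n : ℕ, ((fun p : ℕ × ℕ => p.1 + p.2) ⁻¹' {n}).Finite := fun n =>
    Set.Finite.ofFinset (Finset.HasAntidiagonal.antidiagonal n)
      (fun a => by simp [Finset.HasAntidiagonal.mem_antidiagonal])
  set F := powersFam x hx (fun n => PowerSeries.coeff n f) with hF
  set G := powersFam x hx (fun n => PowerSeries.coeff n g) with hG
  have htfin : ∀ n : ℕ, (hp n).toFinset = Finset.HasAntidiagonal.antidiagonal n := by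
    intro n
    ext a
    simp [Finset.HasAntidiagonal.mem_antidiagonal]
  have key : fiberFam (SummableFamily.smul F G) (fun p => p.1 + p.2) hp =
      powersFam x hx (fun n => PowerSeries.coeff n (f * g)) := by
    refine SummableFamily.ext fun n => ?_
    show ∑ a ∈ (hp n).toFinset, (SummableFamily.smul F G) a =
      PowerSeries.coeff n (f * g) • x ^ n
    rw [htfin n]
    have hterm : ∀ a ∈ Finset.HasAntidiagonal.antidiagonal n, (SummableFamily.smul F G) a =
        (PowerSeries.coeff a.1 f * PowerSeries.coeff a.2 g) • x ^ n := by
      intro a ha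
      rw [Finset.HasAntidiagonal.mem_antidiagonal] at ha
      rw [SummableFamily.smul_toFun, HahnSeries.of_symm_smul_of_eq_mul]
      show (PowerSeries.coeff a.1 f • x ^ a.1) * (PowerSeries.coeff a.2 g • x ^ a.2) = _
      rw [smul_mul_smul_comm, ← _root_.pow_add, ha]
    rw [Finset.sum_congr rfl hterm, ← Finset.sum_smul, PowerSeries.coeff_mul]
  rw [pseval, pseval, pseval, ← key, fiberFam_hsum, SummableFamily.smul_hsum,
    HahnSeries.of_symm_smul_of_eq_mul]

theorem pseval_pow (x : HahnSeries Γ k) (hx : 0 < x.orderTop) (f : PowerSeries k)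
    (n : ℕ) : pseval x hx (f ^ n) = (pseval x hx f) ^ n := by
  induction n with
  | zero => simpa using pseval_one x hx
  | succ n ih => rw [pow_succ, pow_succ, pseval_mul, ih]

theorem orderTop_pos_of_support {y : HahnSeries Γ k}
    (hy : ∀ g ∈ y.support, 0 < g) : 0 < y.orderTop := by
  rcases eq_or_ne y 0 with h | h
  · rw [h, HahnSeries.orderTop_zero]
    exact WithTop.top_pos
  · rw [HahnSeries.orderTop_of_ne_zero h, ← WithTop.coe_zero, WithTop.coe_lt_coe]
    exact hy _ (y.isWF_support.min_mem (HahnSeries.support_nonempty_iff.2 h))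

theorem support_pos_of_orderTop {y : HahnSeries Γ k} (hy : 0 < y.orderTop) :
    ∀ g ∈ y.support, 0 < g := by
  intro g hg
  have := HahnSeries.orderTop_le_of_coeff_ne_zero hg
  have h2 : (0 : WithTop Γ) < (g : WithTop Γ) := lt_of_lt_of_le hy this
  rw [← WithTop.coe_zero, WithTop.coe_lt_coe] at h2
  exact h2

theorem support_pow_nonneg {x : HahnSeries Γ k} (hx : 0 < x.orderTop) (n : ℕ) :
    ∀ g ∈ (x ^ n).support, 0 ≤ g := by
  induction n with
  | zero =>
    intro g hg
    rw [pow_zero] at hg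
    have := HahnSeries.support_single_subset (a := (0 : Γ)) (r := (1 : k))
    rw [show ((1 : HahnSeries Γ k) = HahnSeries.single 0 1) from rfl] at hg
    have h0 := this hg
    simp only [Set.mem_singleton_iff] at h0
    exact h0.ge
  | succ n ih =>
    intro g hg
    rw [pow_succ] at hg
    obtain ⟨a, ha, b, hb, rfl⟩ := HahnSeries.support_mul_subset hg
    exact add_nonneg (ih a ha) (support_pos_of_orderTop hx b hb).le

theorem support_pow_pos {x : HahnSeries Γ k} (hx : 0 < x.orderTop) (n : ℕ)
    (hn : n ≠ 0) : ∀ g ∈ (x ^ n).support, 0 < g := by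
  obtain ⟨m, rfl⟩ := Nat.exists_eq_succ_of_ne_zero hn
  intro g hg
  rw [pow_succ] at hg
  obtain ⟨a, ha, b, hb, rfl⟩ := HahnSeries.support_mul_subset hg
  exact add_pos_of_nonneg_of_pos (support_pow_nonneg hx m a ha)
    (support_pos_of_orderTop hx b hb)

theorem coeff_pow_eq_zero {f : PowerSeries k}
    (hf0 : PowerSeries.constantCoeff f = 0) {m n : ℕ} (h : m < n) :
    PowerSeries.coeff m (f ^ n) = 0 := by
  have hdvd : PowerSeries.X ^ n ∣ f ^ n :=
    pow_dvd_pow_of_dvd (PowerSeries.X_dvd_iff.2 hf0) n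
  exact PowerSeries.X_pow_dvd_iff.1 hdvd m h

theorem pseval_support_subset (x : HahnSeries Γ k) (hx : 0 < x.orderTop)
    (f : PowerSeries k) (hf0 : PowerSeries.constantCoeff f = 0) :
    ∀ g ∈ (pseval x hx f).support, 0 < g := by
  intro g hg
  have := SummableFamily.support_hsum_subset hg
  obtain ⟨_, ⟨n, rfl⟩, hn⟩ := this
  simp only at hn
  rw [show ((powersFam x hx fun n => (PowerSeries.coeff n) f) n =
    PowerSeries.coeff n f • x ^ n) from rfl] at hn
  rcases eq_or_ne n 0 with h | h
  · exfalso
    rw [h, PowerSeries.coeff_zero_eq_constantCoeff, hf0, zero_smul] at hn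
    simp at hn
  · refine support_pow_pos hx n h g ?_
    rw [HahnSeries.mem_support, HahnSeries.coeff_smul] at hn
    exact fun hc => hn (by rw [hc, smul_zero])

/-- Composition of power series, defined coefficientwise. -/
noncomputable def psComp (g f : PowerSeries k) : PowerSeries k :=
  PowerSeries.mk fun m => ∑ n ∈ Finset.range (m + 1),
    PowerSeries.coeff n g * PowerSeries.coeff m (f ^ n)

theorem pseval_comp (x : HahnSeries Γ k) (hx : 0 < x.orderTop)
    (f : PowerSeries k) (hf0 : PowerSeries.constantCoeff f = 0)
    (hy : 0 < (pseval x hx f).orderTop) (g : PowerSeries k) :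
    pseval (pseval x hx f) hy g = pseval x hx (psComp g f) := by
  classical
  set y := pseval x hx f with hydef
  ext gq
  set Px : Finset ℕ :=
    ((SummableFamily.powers x).finite_co_support' gq).toFinset with hPxdef
  have hPx : ∀ m : ℕ, (x ^ m).coeff gq ≠ 0 → m ∈ Px := by
    intro m hm
    rw [hPxdef, Set.Finite.mem_toFinset]
    show ((SummableFamily.powers x) m).coeff gq ≠ 0
    rwa [show ((SummableFamily.powers x) m = x ^ m) from SummableFamily.powers_of_orderTop_pos hx m]
  have hyn : ∀ n : ℕ, (y ^ n).coeff gq =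
      ∑ m ∈ Px, PowerSeries.coeff m (f ^ n) * (x ^ m).coeff gq := by
    intro n
    rw [hydef, ← pseval_pow, pseval,
      SummableFamily.coeff_hsum_eq_sum_of_subset (t := Px)]
    · refine Finset.sum_congr rfl fun m _ => ?_
      show (PowerSeries.coeff m (f ^ n) • x ^ m).coeff gq = _
      rw [HahnSeries.coeff_smul, smul_eq_mul]
    · intro m hm
      simp only [ne_eq, Set.mem_setOf_eq, powersFam_apply, HahnSeries.coeff_smul,
        smul_eq_mul] at hm
      exact hPx m (right_ne_zero_of_mul hm)
  set N := Px.sup id with hNdef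
  have hmN : ∀ m ∈ Px, m ≤ N := fun m hm => Finset.le_sup (f := id) hm
  have hLHS : (pseval y hy g).coeff gq = ∑ n ∈ Finset.range (N + 1),
      PowerSeries.coeff n g * (y ^ n).coeff gq := by
    rw [pseval, SummableFamily.coeff_hsum_eq_sum_of_subset (t := Finset.range (N + 1))]
    · exact Finset.sum_congr rfl fun n _ => by
        show (PowerSeries.coeff n g • y ^ n).coeff gq = _
        rw [HahnSeries.coeff_smul, smul_eq_mul]
    · intro n hn
      simp only [ne_eq, Set.mem_setOf_eq, powersFam_apply, HahnSeries.coeff_smul,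
        smul_eq_mul] at hn
      have h2 : (y ^ n).coeff gq ≠ 0 := right_ne_zero_of_mul hn
      rw [hyn n] at h2
      obtain ⟨m, hm, hne⟩ := Finset.exists_ne_zero_of_sum_ne_zero h2
      have h3 : PowerSeries.coeff m (f ^ n) ≠ 0 := left_ne_zero_of_mul hne
      have h4 : n ≤ m := by
        by_contra h5
        exact h3 (coeff_pow_eq_zero hf0 (Nat.lt_of_not_le h5))
      simp only [Finset.coe_range, Set.mem_Iio]
      exact Nat.lt_succ_of_le (le_trans h4 (hmN m hm))
  have hRHS : (pseval x hx (psComp g f)).coeff gq =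
      ∑ m ∈ Px, PowerSeries.coeff m (psComp g f) * (x ^ m).coeff gq := by
    rw [pseval, SummableFamily.coeff_hsum_eq_sum_of_subset (t := Px)]
    · exact Finset.sum_congr rfl fun m _ => by
        show (PowerSeries.coeff m (psComp g f) • x ^ m).coeff gq = _
        rw [HahnSeries.coeff_smul, smul_eq_mul]
    · intro m hm
      simp only [ne_eq, Set.mem_setOf_eq, powersFam_apply, HahnSeries.coeff_smul,
        smul_eq_mul] at hm
      exact hPx m (right_ne_zero_of_mul hm)
  rw [hLHS, hRHS]
  simp_rw [hyn, Finset.mul_sum]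
  rw [Finset.sum_comm]
  refine Finset.sum_congr rfl fun m hm => ?_
  rw [psComp, PowerSeries.coeff_mk, Finset.sum_mul]
  refine (Finset.sum_subset (Finset.range_subset_range.2 (Nat.succ_le_succ (hmN m hm)))
    (fun n _ hn => ?_)).symm.trans (Finset.sum_congr rfl fun n _ => by ring)
  have : m < n := by
    rw [Finset.mem_range, Nat.lt_succ_iff] at hn
    omega
  simp [coeff_pow_eq_zero hf0 this]

theorem pseval_support_subset' (x : HahnSeries Γ k) (hx : 0 < x.orderTop)
    (f : PowerSeries k) :
    (pseval x hx f).support ⊆ ⋃ n : ℕ, (x ^ n).support := by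
  intro g hg
  obtain ⟨_, ⟨n, rfl⟩, hn⟩ := SummableFamily.support_hsum_subset hg
  simp only at hn
  rw [show ((powersFam x hx fun n => (PowerSeries.coeff n) f) n =
    PowerSeries.coeff n f • x ^ n) from rfl] at hn
  refine Set.mem_iUnion.2 ⟨n, ?_⟩
  rw [HahnSeries.mem_support, HahnSeries.coeff_smul] at hn
  exact fun h => hn (by rw [h, smul_zero])

theorem support_pow_subset_submonoid {x : HahnSeries Γ k} (C : AddSubmonoid Γ)
    (hx : (x.support : Set Γ) ⊆ C) (n : ℕ) : ((x ^ n).support : Set Γ) ⊆ C := by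
  induction n with
  | zero =>
    intro g hg
    rw [pow_zero] at hg
    have h0 := HahnSeries.support_single_subset
      (a := (0 : Γ)) (r := (1 : k)) hg
    simp only [Set.mem_singleton_iff] at h0
    rw [h0]
    exact zero_mem C
  | succ n ih =>
    intro g hg
    rw [pow_succ] at hg
    obtain ⟨a, ha, b, hb, rfl⟩ := HahnSeries.support_mul_subset hg
    exact add_mem (ih ha) (hx hb)

theorem pseval_congr {x x' : HahnSeries Γ k} (h : x = x') (hx : 0 < x.orderTop)
    (hx' : 0 < x'.orderTop) (f : PowerSeries k) : pseval x hx f = pseval x' hx' f := by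
  subst h; rfl

theorem pseval_zero (hx : 0 < (0 : HahnSeries Γ k).orderTop) (f : PowerSeries k) :
    pseval 0 hx f = HahnSeries.C (PowerSeries.constantCoeff f) := by
  ext g
  rw [pseval, SummableFamily.coeff_hsum_eq_sum_of_subset (t := {0})]
  · rw [Finset.sum_singleton]
    show (PowerSeries.coeff 0 f • (0 : HahnSeries Γ k) ^ 0).coeff g = _
    rw [pow_zero, HahnSeries.coeff_smul, PowerSeries.coeff_zero_eq_constantCoeff]
    show PowerSeries.constantCoeff f • (HahnSeries.single 0 1 : HahnSeries Γ k).coeff g =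
      (HahnSeries.single (0 : Γ) (PowerSeries.constantCoeff f)).coeff g
    rcases eq_or_ne g 0 with h | h
    · rw [h, HahnSeries.coeff_single_same, HahnSeries.coeff_single_same, smul_eq_mul, mul_one]
    · rw [HahnSeries.coeff_single_of_ne h, HahnSeries.coeff_single_of_ne h, smul_zero]
  · intro n hn
    simp only [ne_eq, Set.mem_setOf_eq, powersFam_apply, HahnSeries.coeff_smul] at hn
    rcases eq_or_ne n 0 with h | h
    · simp [h]
    · exfalso
      apply hn
      rw [zero_pow h, HahnSeries.coeff_zero, smul_zero]

/-- The family `n ↦ c n • x ^ (n+1)`. -/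
def shiftFam (x : HahnSeries Γ k) (hx : 0 < x.orderTop) (c : ℕ → k) :
    SummableFamily Γ k ℕ where
  toFun n := c n • x ^ (n + 1)
  isPWO_iUnion_support' := by
    refine (SummableFamily.isPWO_iUnion_support_powers (zero_le_orderTop_iff.mp hx.le)).mono (Set.iUnion_subset fun n => ?_)
    refine Set.Subset.trans (fun g hg => ?_)
      (Set.subset_iUnion (fun m => (x ^ m).support) (n + 1))
    rw [HahnSeries.mem_support, HahnSeries.coeff_smul] at hg
    exact fun h => hg (by rw [h, smul_zero])
  finite_co_support' g := by
    refine (((SummableFamily.powers x).finite_co_support g).preimage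
      (Set.injOn_of_injective Nat.succ_injective)).subset fun n hn => ?_
    simp only [ne_eq, Set.mem_setOf_eq, HahnSeries.coeff_smul] at hn
    simp only [Set.mem_preimage, Function.mem_support, SummableFamily.coe_powers hx]
    exact fun h => hn (by rw [show x ^ (n + 1) = x ^ Nat.succ n from rfl, h, smul_zero])

theorem shiftFam_hsum (x : HahnSeries Γ k) (hx : 0 < x.orderTop) (c : ℕ → k) :
    (shiftFam x hx c).hsum =
      (powersFam x hx (fun n => if n = 0 then 0 else c (n - 1))).hsum := by
  rw [← SummableFamily.hsum_embDomain (shiftFam x hx c) ⟨Nat.succ, Nat.succ_injective⟩]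
  congr 1
  refine SummableFamily.ext fun n => ?_
  cases n with
  | zero =>
    rw [SummableFamily.embDomain_notin_range]
    · show (0 : HahnSeries Γ k) = (if (0 : ℕ) = 0 then 0 else c (0 - 1)) • x ^ 0
      rw [if_pos rfl, zero_smul]
    · rintro ⟨m, hm⟩
      exact Nat.succ_ne_zero m hm
  | succ m =>
    have h1 : (⟨Nat.succ, Nat.succ_injective⟩ : ℕ ↪ ℕ) m = m + 1 := rfl
    rw [show m + 1 = (⟨Nat.succ, Nat.succ_injective⟩ : ℕ ↪ ℕ) m from rfl,
      SummableFamily.embDomain_image, h1]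
    show c m • x ^ (m + 1) = (if m + 1 = 0 then 0 else c (m + 1 - 1)) • x ^ (m + 1)
    rw [if_neg (Nat.succ_ne_zero m), Nat.add_sub_cancel]

end Gamma

section PS

open PowerSeries

variable {k : Type v} [Field k] [CharZero k]

/-- The exponential power series. -/
noncomputable def expps : PowerSeries k := PowerSeries.mk fun n => (n.factorial : k)⁻¹

/-- The series `log(1+X)`. -/
noncomputable def logps : PowerSeries k :=
  PowerSeries.mk fun n => if n = 0 then 0 else (-1) ^ (n - 1) / n

theorem coeff_expps (n : ℕ) : coeff n (expps : PowerSeries k) = (n.factorial : k)⁻¹ :=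
  coeff_mk _ _

theorem coeff_logps (n : ℕ) :
    coeff n (logps : PowerSeries k) =
      if n = 0 then 0 else ((-1 : k) ^ (n - 1) / (n : k)) :=
  coeff_mk _ _

theorem constantCoeff_logps : constantCoeff (logps : PowerSeries k) = 0 := by
  rw [← coeff_zero_eq_constantCoeff, coeff_logps]
  simp

theorem coeff_dlogps (n : ℕ) :
    coeff n (PowerSeries.derivative (R := k) (logps : PowerSeries k)) = (-1) ^ n := by
  have h1 : ((n : k) + 1) ≠ 0 := Nat.cast_add_one_ne_zero n
  rw [PowerSeries.coeff_derivative, coeff_logps, if_neg (Nat.succ_ne_zero n)]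
  simp only [Nat.add_sub_cancel]
  push_cast
  rw [div_mul_cancel₀ _ h1]

theorem one_add_X_mul_dlogps :
    ((1 : PowerSeries k) + X) * PowerSeries.derivative (R := k) logps = 1 := by
  ext n
  rw [add_mul, one_mul, map_add]
  cases n with
  | zero =>
    rw [coeff_zero_eq_constantCoeff, map_mul, constantCoeff_X, zero_mul,
      ← coeff_zero_eq_constantCoeff, coeff_dlogps]
    simp
  | succ n =>
    rw [coeff_succ_X_mul, coeff_dlogps, coeff_dlogps, coeff_one]
    simp [pow_succ]

/-- The inverse of `1 + X`. -/
noncomputable def altps : PowerSeries k := PowerSeries.mk fun n => (-1) ^ n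

theorem one_add_X_mul_altps : ((1 : PowerSeries k) + X) * altps = 1 := by
  ext n
  rw [add_mul, one_mul, map_add]
  cases n with
  | zero =>
    rw [coeff_zero_eq_constantCoeff, map_mul, constantCoeff_X, zero_mul,
      ← coeff_zero_eq_constantCoeff, coeff_zero_eq_constantCoeff]
    simp [altps]
  | succ n =>
    rw [coeff_succ_X_mul, coeff_one]
    simp [altps, pow_succ]

theorem coeff_psComp_expps_logps (m : ℕ) :
    coeff m (psComp (expps : PowerSeries k) logps) =
      ∑ n ∈ Finset.range (m + 1), (n.factorial : k)⁻¹ * coeff m (logps ^ n) := by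
  rw [psComp, coeff_mk]
  exact Finset.sum_congr rfl fun n _ => by rw [coeff_expps]

theorem coeff_dH (m : ℕ) :
    coeff m (PowerSeries.derivative (R := k) (psComp (expps : PowerSeries k) logps)) =
      ∑ j ∈ Finset.range (m + 1), (j.factorial : k)⁻¹ *
        coeff m ((logps : PowerSeries k) ^ j * PowerSeries.derivative (R := k) logps) := by
  rw [PowerSeries.coeff_derivative, coeff_psComp_expps_logps, Finset.sum_mul]
  rw [Finset.sum_range_succ']
  have h0 : ((Nat.factorial 0 : k))⁻¹ * coeff (m + 1) ((logps : PowerSeries k) ^ 0) *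
      ((m : k) + 1) = 0 := by
    rw [pow_zero, coeff_one, if_neg (Nat.succ_ne_zero m)]
    ring
  rw [h0, add_zero]
  refine Finset.sum_congr rfl fun j _ => ?_
  have hder : coeff (m + 1) ((logps : PowerSeries k) ^ (j + 1)) * ((m : k) + 1) =
      ((j : k) + 1) * coeff m ((logps : PowerSeries k) ^ j *
        PowerSeries.derivative (R := k) logps) := by
    rw [← PowerSeries.coeff_derivative]
    rw [Derivation.leibniz_pow]
    simp only [Nat.add_sub_cancel, smul_eq_mul]
    rw [map_nsmul, nsmul_eq_mul]
    push_cast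
    ring
  have hfac : ((j + 1).factorial : k)⁻¹ * ((j : k) + 1) = (j.factorial : k)⁻¹ := by
    rw [Nat.factorial_succ]
    have hj : ((j : k) + 1) ≠ 0 := Nat.cast_add_one_ne_zero j
    have hjf : ((j.factorial : k)) ≠ 0 := by
      exact_mod_cast Nat.factorial_ne_zero j
    push_cast
    field_simp
  rw [mul_assoc, hder, ← mul_assoc, hfac]

theorem derivative_psComp :
    PowerSeries.derivative (R := k) (psComp (expps : PowerSeries k) logps) =
      PowerSeries.derivative (R := k) logps * psComp (expps : PowerSeries k) logps := by
  ext m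
  rw [coeff_dH, coeff_mul]
  have hstep : ∀ p ∈ Finset.HasAntidiagonal.antidiagonal m,
      coeff p.1 (PowerSeries.derivative (R := k) logps) *
        coeff p.2 (psComp (expps : PowerSeries k) logps) =
      ∑ n ∈ Finset.range (m + 1), (n.factorial : k)⁻¹ *
        (coeff p.1 (PowerSeries.derivative (R := k) logps) *
          coeff p.2 ((logps : PowerSeries k) ^ n)) := by
    intro p hp
    rw [Finset.HasAntidiagonal.mem_antidiagonal] at hp
    rw [coeff_psComp_expps_logps, Finset.mul_sum]
    rw [← Finset.sum_subset (Finset.range_subset_range.2 (Nat.succ_le_succ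
      (le_trans (Nat.le_add_left p.2 p.1) hp.le)))]
    · exact Finset.sum_congr rfl fun n _ => by ring
    · intro n _ hn
      rw [Finset.mem_range, Nat.lt_succ_iff] at hn
      rw [coeff_pow_eq_zero constantCoeff_logps (Nat.lt_of_not_le hn)]
      ring
  rw [Finset.sum_congr rfl hstep, Finset.sum_comm]
  refine Finset.sum_congr rfl fun n _ => ?_
  rw [← Finset.mul_sum, ← coeff_mul, mul_comm ((logps : PowerSeries k) ^ n)]

theorem psComp_expps_logps : psComp (expps : PowerSeries k) logps = 1 + X := by
  set H := psComp (expps : PowerSeries k) logps with hH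
  have key : ((1 : PowerSeries k) + X) * PowerSeries.derivative (R := k) H = H := by
    rw [derivative_psComp, ← mul_assoc, one_add_X_mul_dlogps, one_mul]
  have hdaltps : ((1 : PowerSeries k) + X) * PowerSeries.derivative (R := k) altps
      = - altps := by
    have := congrArg (PowerSeries.derivative (R := k)) (one_add_X_mul_altps (k := k))
    rw [Derivation.leibniz, Derivation.map_one_eq_zero] at this
    rw [map_add, Derivation.map_one_eq_zero, PowerSeries.derivative_X, zero_add] at this
    simp only [smul_eq_mul, mul_one] at this
    linear_combination this
  have hdQ : PowerSeries.derivative (R := k) (H * altps) = 0 := by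
    have h1 : ((1 : PowerSeries k) + X) * PowerSeries.derivative (R := k) (H * altps)
        = 0 := by
      rw [Derivation.leibniz]
      simp only [smul_eq_mul]
      calc ((1 : PowerSeries k) + X) * (H * PowerSeries.derivative (R := k) altps
            + altps * PowerSeries.derivative (R := k) H)
          = H * (((1 : PowerSeries k) + X) * PowerSeries.derivative (R := k) altps)
            + altps * (((1 : PowerSeries k) + X) * PowerSeries.derivative (R := k) H) := by
            ring
        _ = 0 := by rw [hdaltps, key]; ring
    calc PowerSeries.derivative (R := k) (H * altps)
        = altps * (((1 : PowerSeries k) + X) *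
            PowerSeries.derivative (R := k) (H * altps)) := by
          rw [← mul_assoc, mul_comm altps, one_add_X_mul_altps, one_mul]
      _ = 0 := by rw [h1, mul_zero]
  have hQ1 : H * altps = 1 := by
    ext n
    cases n with
    | zero =>
      rw [coeff_zero_eq_constantCoeff, map_mul]
      have hH0 : constantCoeff H = 1 := by
        rw [← coeff_zero_eq_constantCoeff, hH, coeff_psComp_expps_logps]
        simp
      have hA0 : constantCoeff (altps : PowerSeries k) = 1 := by
        rw [← coeff_zero_eq_constantCoeff]
        simp [altps]
      rw [hH0, hA0, map_one, one_mul]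
    | succ n =>
      have := congrArg (coeff n) hdQ
      rw [PowerSeries.coeff_derivative, map_zero] at this
      have hne : ((n : k) + 1) ≠ 0 := Nat.cast_add_one_ne_zero n
      have h2 : coeff (n + 1) (H * altps) = 0 := by
        rcases mul_eq_zero.1 this with h | h
        · exact h
        · exact absurd h hne
      rw [h2, coeff_one, if_neg (Nat.succ_ne_zero n)]
  calc H = H * (((1 : PowerSeries k) + X) * altps) := by
        rw [one_add_X_mul_altps, mul_one]
    _ = (H * altps) * ((1 : PowerSeries k) + X) := by ring
    _ = 1 + X := by rw [hQ1, one_mul]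

end PS

section ExpLog

open HahnSeries

variable {Γ : Type u} [AddCommMonoid Γ] [LinearOrder Γ] [IsOrderedCancelAddMonoid Γ]
  {k : Type v} [Field k] [CharZero k]

theorem exp_add' (a b : HahnSeries Γ k) (ha : 0 < a.orderTop) (hb : 0 < b.orderTop)
    (hab : 0 < (a + b).orderTop) :
    pseval (a + b) hab (expps : PowerSeries k) =
      pseval a ha expps * pseval b hb expps := by
  classical
  have hp : ∀ n : ℕ, ((fun p : ℕ × ℕ => p.1 + p.2) ⁻¹' {n}).Finite := fun n =>
    Set.Finite.ofFinset (Finset.HasAntidiagonal.antidiagonal n)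
      (fun p => by simp [Finset.HasAntidiagonal.mem_antidiagonal])
  set Fa := powersFam a ha (fun n => PowerSeries.coeff (R := k) n expps) with hFa
  set Fb := powersFam b hb (fun n => PowerSeries.coeff (R := k) n expps) with hFb
  have htfin : ∀ n : ℕ, (hp n).toFinset = Finset.HasAntidiagonal.antidiagonal n := by
    intro n
    ext p
    simp [Finset.HasAntidiagonal.mem_antidiagonal]
  have key : fiberFam (HahnSeries.SummableFamily.smul Fa Fb) (fun p => p.1 + p.2) hp =
      powersFam (a + b) hab (fun n => PowerSeries.coeff (R := k) n expps) := by
    refine HahnSeries.SummableFamily.ext fun n => ?_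
    show ∑ p ∈ (hp n).toFinset, (HahnSeries.SummableFamily.smul Fa Fb) p =
      PowerSeries.coeff (R := k) n expps • (a + b) ^ n
    rw [htfin n]
    have hterm : ∀ p ∈ Finset.HasAntidiagonal.antidiagonal n,
        (HahnSeries.SummableFamily.smul Fa Fb) p =
        ((p.1.factorial : k)⁻¹ * (p.2.factorial : k)⁻¹) • (a ^ p.1 * b ^ p.2) := by
      intro p hp'
      rw [HahnSeries.SummableFamily.smul_toFun, HahnSeries.of_symm_smul_of_eq_mul]
      show (PowerSeries.coeff (R := k) p.1 expps • a ^ p.1) *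
          (PowerSeries.coeff (R := k) p.2 expps • b ^ p.2) = _
      rw [smul_mul_smul_comm, coeff_expps, coeff_expps]
    rw [Finset.sum_congr rfl hterm, Finset.Nat.sum_antidiagonal_eq_sum_range_succ
      (f := fun i j => ((i.factorial : k)⁻¹ * (j.factorial : k)⁻¹) • (a ^ i * b ^ j)),
      coeff_expps, add_pow, Finset.smul_sum]
    refine Finset.sum_congr rfl fun i hi => ?_
    rw [Finset.mem_range, Nat.lt_succ_iff] at hi
    have hcast : a ^ i * b ^ (n - i) * (n.choose i : HahnSeries Γ k) =
        ((n.choose i : k)) • (a ^ i * b ^ (n - i)) := by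
      rw [mul_comm, ← nsmul_eq_mul, Nat.cast_smul_eq_nsmul]
    rw [hcast, smul_smul]
    congr 1
    have hfact := Nat.choose_mul_factorial_mul_factorial hi
    have hcast2 : (n.choose i : k) * (i.factorial : k) * ((n - i).factorial : k)
        = (n.factorial : k) := by exact_mod_cast congrArg Nat.cast hfact
    have h1 : (i.factorial : k) ≠ 0 := by exact_mod_cast Nat.factorial_ne_zero i
    have h2 : ((n - i).factorial : k) ≠ 0 := by exact_mod_cast Nat.factorial_ne_zero (n - i)
    have h3 : (n.factorial : k) ≠ 0 := by exact_mod_cast Nat.factorial_ne_zero n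
    have hC : (n.choose i : k) ≠ 0 := by
      exact_mod_cast (Nat.choose_pos hi).ne'
    rw [← hcast2, mul_inv, mul_inv]
    field_simp
  rw [pseval, pseval, pseval, ← key, fiberFam_hsum,
    HahnSeries.SummableFamily.smul_hsum, HahnSeries.of_symm_smul_of_eq_mul]

end ExpLog

section MainAux

open HahnSeries

variable {M : Type} [AddCommGroup M] [LinearOrder M] [IsOrderedAddMonoid M] {k : Type} [Field k] [CharZero k]

theorem expS_eq (f : HahnSeries Mᵒᵈ k) (hf : 0 < f.orderTop) :
    expS f = pseval f hf (expps : PowerSeries k) := by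
  unfold expS
  rw [show (fun n : ℕ => ((n.factorial : k))⁻¹ • f ^ n) =
    ⇑(powersFam f hf (fun n => (n.factorial : k)⁻¹)) from rfl, famSum_coeFam, pseval]
  congr 1
  exact congrArg (powersFam f hf) (funext fun n => (coeff_expps n).symm)

theorem log1p_eq (ε : HahnSeries Mᵒᵈ k) (hε : 0 < ε.orderTop) :
    log1p ε = pseval ε hε (logps : PowerSeries k) := by
  unfold log1p
  rw [show (fun n : ℕ => ((-1 : k) ^ n / ((n : k) + 1)) • ε ^ (n + 1)) =
    ⇑(shiftFam ε hε (fun n => (-1 : k) ^ n / ((n : k) + 1))) from rfl, famSum_coeFam,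
    shiftFam_hsum, pseval]
  congr 1
  refine congrArg (powersFam ε hε) (funext fun n => ?_)
  cases n with
  | zero => rw [coeff_logps, if_pos rfl, if_pos rfl]
  | succ m =>
    rw [coeff_logps, if_neg (Nat.succ_ne_zero m), if_neg (Nat.succ_ne_zero m),
      Nat.add_sub_cancel]
    push_cast
    ring

theorem orderTop_log1p_pos (ε : HahnSeries Mᵒᵈ k) (hε : 0 < ε.orderTop) :
    0 < (log1p ε).orderTop := by
  rw [log1p_eq ε hε]
  exact orderTop_pos_of_support (pseval_support_subset ε hε logps constantCoeff_logps)

theorem expS_log1p (ε : HahnSeries Mᵒᵈ k) (hε : 0 < ε.orderTop) :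
    expS (log1p ε) = 1 + ε := by
  have hy : 0 < (log1p ε).orderTop := orderTop_log1p_pos ε hε
  have hy' : 0 < (pseval ε hε (logps : PowerSeries k)).orderTop :=
    orderTop_pos_of_support (pseval_support_subset ε hε logps constantCoeff_logps)
  rw [expS_eq _ hy, pseval_congr (log1p_eq ε hε) hy hy',
    pseval_comp ε hε logps constantCoeff_logps hy' expps, psComp_expps_logps,
    pseval_add, pseval_one, pseval_X]

theorem expS_sum {ι : Type} (J : Finset ι) (F : ι → HahnSeries Mᵒᵈ k)
    (hF : ∀ i, 0 < (F i).orderTop) :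
    expS (∑ i ∈ J, F i) = ∏ i ∈ J, expS (F i) := by
  classical
  have hsum0 : ∀ (J : Finset ι), 0 < (∑ i ∈ J, F i).orderTop := by
    intro J
    refine orderTop_pos_of_support fun g hg => ?_
    obtain ⟨_, ⟨i, rfl⟩, hmem⟩ := support_sum_subset J F hg
    simp only [Set.mem_iUnion] at hmem
    obtain ⟨_, hmem⟩ := hmem
    exact support_pos_of_orderTop (hF i) g hmem
  induction J using Finset.cons_induction with
  | empty =>
    rw [Finset.sum_empty, Finset.prod_empty, expS_eq 0 (by rw [HahnSeries.orderTop_zero]; exact WithTop.top_pos), pseval_zero,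
      ← PowerSeries.coeff_zero_eq_constantCoeff, coeff_expps]
    simp
  | cons i J hi ih =>
    rw [Finset.sum_cons, Finset.prod_cons, ← ih]
    have h1 : 0 < (F i + ∑ j ∈ J, F j).orderTop := by
      have := hsum0 (Finset.cons i J hi)
      rwa [Finset.sum_cons] at this
    rw [expS_eq _ h1, exp_add' (F i) (∑ j ∈ J, F j) (hF i) (hsum0 J) h1,
      ← expS_eq (F i) (hF i), ← expS_eq _ (hsum0 J)]

end MainAux
/-- For a summable family `(ε_i)` in `k[[𝔐]]^{≺1}` (`k` of
characteristic 0), the family `(∏_{i∈E} ε_i)_E` over finite `E ⊆ I` is summable, and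
`exp(∑_i log(1+ε_i)) = ∑_E ∏_{i∈E} ε_i`. -/
theorem statement12 {k : Type} [Field k] [CharZero k] {M : Type}
    [AddCommGroup M] [LinearOrder M] [IsOrderedAddMonoid M] {ι : Type}
    (ε : ι → HahnSeries Mᵒᵈ k) (hε : ∀ i, prec (ε i) 1) (hsum : IsSummable ε) :
    IsSummable (fun E : Finset ι => ∏ i ∈ E, ε i) ∧
    expS (famSum fun i => log1p (ε i)) = famSum fun E : Finset ι => ∏ i ∈ E, ε i := by
  classical
  -- positivity of supports
  have hpos : ∀ i, ∀ m ∈ (ε i).support, (0 : Mᵒᵈ) < m := by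
    intro i m hm
    obtain ⟨n, hn, hlt⟩ := (hε i).2 m hm
    rw [HahnSeries.support_one, Set.mem_singleton_iff] at hn
    subst hn
    exact hlt
  have hxi : ∀ i, 0 < (ε i).orderTop := fun i => orderTop_pos_of_support (hpos i)
  have hS : (⋃ i, (ε i).support).IsPWO := wellBased_isPWO hsum.1
  set CS : AddSubmonoid Mᵒᵈ := AddSubmonoid.closure (⋃ i, (ε i).support) with hCSdef
  have hCSpwo : (CS : Set Mᵒᵈ).IsPWO := by
    refine hS.addSubmonoid_closure (fun g hg => ?_)
    obtain ⟨_, ⟨i, rfl⟩, hmem⟩ := hg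
    exact (hpos i g hmem).le
  have hCSsupp : ∀ i, ((ε i).support : Set Mᵒᵈ) ⊆ CS := fun i =>
    (Set.subset_iUnion (fun i => (ε i).support) i).trans AddSubmonoid.subset_closure
  have hprodsupp : ∀ E : Finset ι, ((∏ i ∈ E, ε i).support : Set Mᵒᵈ) ⊆ CS := by
    intro E
    induction E using Finset.cons_induction with
    | empty =>
      rw [Finset.prod_empty]
      intro g hg
      have h0 := HahnSeries.support_single_subset (a := (0 : Mᵒᵈ)) (r := (1 : k)) hg
      simp only [Set.mem_singleton_iff] at h0
      rw [h0]; exact zero_mem CS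
    | cons i E hiE ih =>
      rw [Finset.prod_cons]
      intro g hg
      obtain ⟨a, ha, b, hb, rfl⟩ := HahnSeries.support_mul_subset hg
      exact add_mem (hCSsupp i ha) (ih hb)
  have hpowsupp : ∀ (i : ι) (n : ℕ), ((ε i ^ n).support : Set Mᵒᵈ) ⊆ CS := fun i n =>
    support_pow_subset_submonoid CS (hCSsupp i) n
  -- the relevant finite index set for a monomial g
  set rel : Mᵒᵈ → Finset ι := fun g =>
    ((Finset.antidiagonal hCSpwo hCSpwo g).image Prod.fst).biUnion
      (fun a => (hsum.2 a).toFinset) with hreldef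
  have hrelkey : ∀ (i : ι) (a b g : Mᵒᵈ), a ∈ (ε i).support → b ∈ CS → a + b = g →
      i ∈ rel g := by
    intro i a b g ha hb hab
    refine Finset.mem_biUnion.2 ⟨a, ?_, (hsum.2 a).mem_toFinset.2 ha⟩
    exact Finset.mem_image.2 ⟨(a, b),
      Finset.mem_addAntidiagonal.2 ⟨hCSsupp i ha, hb, hab⟩, rfl⟩
  -- the summable family of finite products
  have hprodpwo : (⋃ E : Finset ι, (∏ i ∈ E, ε i).support).IsPWO :=
    hCSpwo.mono (Set.iUnion_subset hprodsupp)
  have hprodcos : ∀ g : Mᵒᵈ, {E : Finset ι | (∏ i ∈ E, ε i).coeff g ≠ 0}.Finite := by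
    intro g
    refine ((rel g).powerset.finite_toSet).subset fun E hE => ?_
    simp only [ne_eq, Set.mem_setOf_eq] at hE
    rw [Finset.coe_powerset, Set.mem_preimage, Set.mem_powerset_iff, Finset.coe_subset]
    intro i hiE
    have hfac : ∏ j ∈ E, ε j = ε i * ∏ j ∈ E.erase i, ε j :=
      (Finset.mul_prod_erase E ε hiE).symm
    rw [hfac] at hE
    have hg : g ∈ (ε i * ∏ j ∈ E.erase i, ε j).support := hE
    obtain ⟨a, ha, b, hb, rfl⟩ := HahnSeries.support_mul_subset hg
    exact hrelkey i a b _ ha (hprodsupp _ hb) rfl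
  set prodFam : HahnSeries.SummableFamily Mᵒᵈ k (Finset ι) :=
    ⟨fun E => ∏ i ∈ E, ε i, hprodpwo, hprodcos⟩ with hprodFam
  have hconj1 : IsSummable (fun E : Finset ι => ∏ i ∈ E, ε i) := isSummable_coeFam prodFam
  refine ⟨hconj1, ?_⟩
  -- the summable family of logarithms
  have hlogsupp : ∀ i, ((log1p (ε i)).support : Set Mᵒᵈ) ⊆
      {g : Mᵒᵈ | g ∈ CS ∧ 0 < g} := by
    intro i g hg
    refine ⟨?_, ?_⟩
    · have h1 : g ∈ ⋃ n : ℕ, ((ε i) ^ n).support := by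
        rw [log1p_eq (ε i) (hxi i)] at hg
        exact pseval_support_subset' (ε i) (hxi i) logps hg
      obtain ⟨_, ⟨n, rfl⟩, hn⟩ := h1
      exact hpowsupp i n hn
    · rw [log1p_eq (ε i) (hxi i)] at hg
      exact pseval_support_subset (ε i) (hxi i) logps constantCoeff_logps g hg
  have hlogpwo : (⋃ i, (log1p (ε i)).support).IsPWO :=
    hCSpwo.mono (Set.iUnion_subset fun i g hg => (hlogsupp i hg).1)
  have hlogcos : ∀ m : Mᵒᵈ, {i | (log1p (ε i)).coeff m ≠ 0}.Finite := by
    intro m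
    refine (rel m).finite_toSet.subset fun i hi => ?_
    simp only [ne_eq, Set.mem_setOf_eq] at hi
    have hm : m ∈ (log1p (ε i)).support := hi
    have hmpos : (0 : Mᵒᵈ) < m := (hlogsupp i hm).2
    have h1 : m ∈ ⋃ n : ℕ, ((ε i) ^ n).support := by
      rw [log1p_eq (ε i) (hxi i)] at hm
      exact pseval_support_subset' (ε i) (hxi i) logps hm
    obtain ⟨_, ⟨n, rfl⟩, hn⟩ := h1
    simp only at hn
    cases n with
    | zero =>
      exfalso
      rw [pow_zero] at hn
      have h0 := HahnSeries.support_single_subset (a := (0 : Mᵒᵈ)) (r := (1 : k)) hn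
      simp only [Set.mem_singleton_iff] at h0
      rw [h0] at hmpos
      exact lt_irrefl _ hmpos
    | succ n =>
      rw [pow_succ'] at hn
      obtain ⟨a, ha, b, hb, rfl⟩ := HahnSeries.support_mul_subset hn
      exact hrelkey i a b _ ha (hpowsupp i n hb) rfl
  set LF : HahnSeries.SummableFamily Mᵒᵈ k ι :=
    ⟨fun i => log1p (ε i), hlogpwo, hlogcos⟩ with hLF
  have hLcoe : famSum (fun i => log1p (ε i)) = LF.hsum := famSum_coeFam LF
  have hLsupp : (LF.hsum.support : Set Mᵒᵈ) ⊆ {g : Mᵒᵈ | g ∈ CS ∧ 0 < g} := by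
    intro g hg
    obtain ⟨_, ⟨i, rfl⟩, hmem⟩ := HahnSeries.SummableFamily.support_hsum_subset hg
    exact hlogsupp i hmem
  have hL : 0 < LF.hsum.orderTop :=
    orderTop_pos_of_support fun g hg => (hLsupp hg).2
  rw [hLcoe]
  have hprodcoe : famSum (fun E : Finset ι => ∏ i ∈ E, ε i) = prodFam.hsum :=
    famSum_coeFam prodFam
  rw [hprodcoe]
  -- coefficientwise
  ext g
  set J : Finset ι := rel g with hJ
  set L' : HahnSeries Mᵒᵈ k := ∑ i ∈ J, log1p (ε i) with hL'def
  have hL'supp : (L'.support : Set Mᵒᵈ) ⊆ {g : Mᵒᵈ | g ∈ CS ∧ 0 < g} := by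
    intro m hm
    obtain ⟨_, ⟨i, rfl⟩, hmem⟩ := support_sum_subset J (fun i => log1p (ε i)) hm
    simp only [Set.mem_iUnion] at hmem
    obtain ⟨_, hmem⟩ := hmem
    exact hlogsupp i hmem
  have hL' : 0 < L'.orderTop := orderTop_pos_of_support fun m hm => (hL'supp hm).2
  -- agreement of L and L' on monomials dividing g
  have hagree : ∀ m : Mᵒᵈ, (∃ c ∈ CS, m + c = g) → LF.hsum.coeff m = L'.coeff m := by
    intro m ⟨c, hc, hmc⟩
    rw [hL'def, sum_coeff']
    refine HahnSeries.SummableFamily.coeff_hsum_eq_sum_of_subset (fun i hi => ?_)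
    simp only [ne_eq, Set.mem_setOf_eq] at hi
    have hm : m ∈ (log1p (ε i)).support := hi
    have hmpos : (0 : Mᵒᵈ) < m := (hlogsupp i hm).2
    have h1 : m ∈ ⋃ n : ℕ, ((ε i) ^ n).support := by
      rw [log1p_eq (ε i) (hxi i)] at hm
      exact pseval_support_subset' (ε i) (hxi i) logps hm
    obtain ⟨_, ⟨n, rfl⟩, hn⟩ := h1
    simp only at hn
    cases n with
    | zero =>
      exfalso
      rw [pow_zero] at hn
      have h0 := HahnSeries.support_single_subset (a := (0 : Mᵒᵈ)) (r := (1 : k)) hn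
      simp only [Set.mem_singleton_iff] at h0
      rw [h0] at hmpos
      exact lt_irrefl _ hmpos
    | succ n =>
      rw [pow_succ'] at hn
      obtain ⟨a, ha, b, hb, hab⟩ := HahnSeries.support_mul_subset hn
      simp only at hab
      refine hrelkey i a (b + c) g ha (add_mem (hpowsupp i n hb) hc) ?_
      rw [← add_assoc, hab, hmc]
  -- agreement of powers
  have hpowagree : ∀ (n : ℕ) (m : Mᵒᵈ), (∃ c ∈ CS, m + c = g) →
      (LF.hsum ^ n).coeff m = (L' ^ n).coeff m := by
    intro n
    induction n with
    | zero => intro m _; rfl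
    | succ n ih =>
      intro m ⟨c, hc, hmc⟩
      rw [pow_succ', pow_succ',
        mul_coeff_subset hCSpwo hCSpwo (fun u hu => (hLsupp hu).1)
          (support_pow_subset_submonoid CS (fun u hu => (hLsupp hu).1) n) m,
        mul_coeff_subset hCSpwo hCSpwo (fun u hu => (hL'supp hu).1)
          (support_pow_subset_submonoid CS (fun u hu => (hL'supp hu).1) n) m]
      refine Finset.sum_congr rfl fun p hp => ?_
      rw [Finset.mem_addAntidiagonal] at hp
      obtain ⟨hp1, hp2, hp3⟩ := hp
      have e1 : LF.hsum.coeff p.1 = L'.coeff p.1 := by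
        refine hagree p.1 ⟨p.2 + c, add_mem hp2 hc, ?_⟩
        rw [← add_assoc, hp3, hmc]
      have e2 : (LF.hsum ^ n).coeff p.2 = (L' ^ n).coeff p.2 := by
        refine ih p.2 ⟨p.1 + c, add_mem hp1 hc, ?_⟩
        rw [← add_assoc, add_comm p.2 p.1, hp3, hmc]
      rw [e1, e2]
  -- exp agreement at g
  have hexp : (expS LF.hsum).coeff g = (expS L').coeff g := by
    rw [expS_eq LF.hsum hL, expS_eq L' hL', pseval, pseval]
    set T : Finset ℕ :=
      ((powersFam LF.hsum hL (fun n => PowerSeries.coeff (R := k) n expps)).finite_co_support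
        g).toFinset ∪
      ((powersFam L' hL' (fun n => PowerSeries.coeff (R := k) n expps)).finite_co_support
        g).toFinset with hT
    rw [HahnSeries.SummableFamily.coeff_hsum_eq_sum_of_subset (t := T)
      (fun n hn => Finset.mem_coe.2 (Finset.mem_union_left _
        ((Set.Finite.mem_toFinset _).2 hn))),
      HahnSeries.SummableFamily.coeff_hsum_eq_sum_of_subset (t := T)
      (fun n hn => Finset.mem_coe.2 (Finset.mem_union_right _
        ((Set.Finite.mem_toFinset _).2 hn)))]
    refine Finset.sum_congr rfl fun n _ => ?_
    show (PowerSeries.coeff (R := k) n expps • LF.hsum ^ n).coeff g =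
      (PowerSeries.coeff (R := k) n expps • L' ^ n).coeff g
    rw [HahnSeries.coeff_smul, HahnSeries.coeff_smul,
      hpowagree n g ⟨0, zero_mem CS, add_zero g⟩]
  -- finite case
  have hfin : expS L' = ∏ i ∈ J, (1 + ε i) := by
    rw [hL'def, expS_sum J (fun i => log1p (ε i))
      (fun i => orderTop_log1p_pos (ε i) (hxi i))]
    exact Finset.prod_congr rfl fun i _ => expS_log1p (ε i) (hxi i)
  -- expand the product
  have hexpand : ∏ i ∈ J, ((1 : HahnSeries Mᵒᵈ k) + ε i) =
      ∑ E ∈ J.powerset, ∏ i ∈ E, ε i := by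
    have h1 : ∀ i ∈ J, (1 : HahnSeries Mᵒᵈ k) + ε i = ε i + 1 := fun i _ => add_comm _ _
    rw [Finset.prod_congr rfl h1, Finset.prod_add]
    exact Finset.sum_congr rfl fun E _ => by rw [Finset.prod_const_one, mul_one]
  -- right-hand side at g
  have hrhs : prodFam.hsum.coeff g = ∑ E ∈ J.powerset, (∏ i ∈ E, ε i).coeff g := by
    refine HahnSeries.SummableFamily.coeff_hsum_eq_sum_of_subset (fun E hE => ?_)
    simp only [ne_eq, Set.mem_setOf_eq] at hE
    rw [Finset.coe_powerset, Set.mem_preimage, Set.mem_powerset_iff, Finset.coe_subset]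
    intro i hiE
    have hfac : ∏ j ∈ E, ε j = ε i * ∏ j ∈ E.erase i, ε j :=
      (Finset.mul_prod_erase E ε hiE).symm
    have hg : g ∈ (ε i * ∏ j ∈ E.erase i, ε j).support := by
      rw [← hfac]; exact hE
    obtain ⟨a, ha, b, hb, rfl⟩ := HahnSeries.support_mul_subset hg
    exact hrelkey i a b _ ha (hprodsupp _ hb) rfl
  rw [hexp, hfin, hexpand, sum_coeff', hrhs]

end LogHyp
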